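/- With M as above (M(⟨s⟩) the free reduced R-module on S^∧s for a pointed set S with linearly ordered S∖{*}), let I be the set of strictly increasing tuples i = (x₁ < ⋯ < x_s) of elements of S∖{*}, and for such an i let e_i ∈ M(⟨s⟩) be the basis element [x₁∧⋯∧x_s]. Then for every functor F : Ωᵒᵖ → Mod R and every family of elements a_i ∈ F(⟨|i|⟩) indexed by i ∈ I, there exists a unique natural transformation T : M → F with T_{⟨|i|⟩}(e_i) = a_i for all i ∈ I. -/

import Mathlib

/-!  Ω is the category of nonempty finite sets ⟨s⟩ = {1,…,s} (encoded here as
`Fin (s+1)`, s : ℕ, so that every object is nonempty) with surjections as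
morphisms.  An `OmegaFunctor R` is a functor Ωᵒᵖ → Mod R. -/

structure OmegaFunctor (R : Type) [CommRing R] where
  obj : ℕ → Type
  [acg : ∀ s, AddCommGroup (obj s)]
  [mod : ∀ s, Module R (obj s)]
  map : ∀ {s t : ℕ} (h : Fin (t + 1) → Fin (s + 1)),
    Function.Surjective h → (obj s →ₗ[R] obj t)
  map_id : ∀ s : ℕ, map (s := s) id Function.surjective_id = LinearMap.id
  map_comp : ∀ {s t u : ℕ} (h : Fin (t + 1) → Fin (s + 1)) (hh : Function.Surjective h)
    (k : Fin (u + 1) → Fin (t + 1)) (hk : Function.Surjective k),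
    map (h ∘ k) (hh.comp hk) = (map k hk).comp (map h hh)

attribute [instance] OmegaFunctor.acg OmegaFunctor.mod

/-- Natural transformations F → G, as a submodule of the product of the Hom modules. -/
def OmegaFunctor.Nat {R : Type} [CommRing R] (F G : OmegaFunctor R) :
    Submodule R (∀ s : ℕ, F.obj s →ₗ[R] G.obj s) where
  carrier := {T | ∀ {s t : ℕ} (h : Fin (t + 1) → Fin (s + 1)) (hs : Function.Surjective h),
    (G.map h hs).comp (T s) = (T t).comp (F.map h hs)}
  add_mem' := by
    intro a b ha hb s t h hs
    simp only [Pi.add_apply, LinearMap.comp_add, LinearMap.add_comp, ha h hs, hb h hs]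
  zero_mem' := by
    intro s t h hs
    simp
  smul_mem' := by
    intro c a ha s t h hs
    simp only [Pi.smul_apply, LinearMap.comp_smul, LinearMap.smul_comp, ha h hs]

/-- The smash-power functor `M(S)` of a pointed set `(S, pt)`:
`M(S)(⟨s⟩)` is the free reduced `R`-module on the smash power `S^∧s`, whose basis is
the set of `s`-tuples of non-basepoint elements of `S`; a surjection `h : ⟨t⟩ → ⟨s⟩`
acts by precomposition on coordinates. -/
noncomputable def Mfun (R : Type) [CommRing R] (S : Type) (pt : S) : OmegaFunctor R where
  obj s := (Fin (s + 1) → {x : S // x ≠ pt}) →₀ R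
  map h _ := Finsupp.lmapDomain R R (fun x => x ∘ h)
  map_id s := by
    exact Finsupp.lmapDomain_id R R
  map_comp h hh k hk := by
    exact Finsupp.lmapDomain_comp R R (fun x => x ∘ h) (fun x => x ∘ k)

/-- The index set `I`: strictly increasing tuples `i = (x₁ < ⋯ < x_s)` of
non-basepoint elements of `S` (a tuple of length `s+1` for each `s : ℕ`). -/
def Idx (S : Type) (pt : S) [LinearOrder {x : S // x ≠ pt}] : Type :=
  Σ s : ℕ, {x : Fin (s + 1) → {a : S // a ≠ pt} // StrictMono x}


section MBasisAux

variable {S : Type} {pt : S} [LinearOrder {x : S // x ≠ pt}]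

/-- Image of a tuple. -/
def Midx.img {t : ℕ} (x : Fin (t + 1) → {x : S // x ≠ pt}) : Finset {x : S // x ≠ pt} :=
  Finset.image x Finset.univ

/-- Length (minus one) of the canonical strictly increasing factor. -/
def Midx.len {t : ℕ} (x : Fin (t + 1) → {x : S // x ≠ pt}) : ℕ := (Midx.img x).card - 1

lemma Midx.card_img {t : ℕ} (x : Fin (t + 1) → {x : S // x ≠ pt}) :
    (Midx.img x).card = Midx.len x + 1 := by
  have : 0 < (Midx.img x).card :=
    Finset.card_pos.2 ⟨x 0, Finset.mem_image_of_mem x (Finset.mem_univ 0)⟩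
  unfold Midx.len; omega

/-- The canonical strictly increasing tuple with the same image as `x`. -/
noncomputable def Midx.iota {t : ℕ} (x : Fin (t + 1) → {x : S // x ≠ pt}) :
    Fin (Midx.len x + 1) → {x : S // x ≠ pt} :=
  ⇑((Midx.img x).orderEmbOfFin (Midx.card_img x))

lemma Midx.iota_mono {t : ℕ} (x : Fin (t + 1) → {x : S // x ≠ pt}) :
    StrictMono (Midx.iota x) :=
  ((Midx.img x).orderEmbOfFin (Midx.card_img x)).strictMono

lemma Midx.mem_img {t : ℕ} (x : Fin (t + 1) → {x : S // x ≠ pt}) (j : Fin (t + 1)) :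
    x j ∈ Midx.img x := Finset.mem_image_of_mem x (Finset.mem_univ j)

/-- The canonical surjection factor. -/
noncomputable def Midx.hmap {t : ℕ} (x : Fin (t + 1) → {x : S // x ≠ pt}) :
    Fin (t + 1) → Fin (Midx.len x + 1) :=
  fun j => ((Midx.img x).orderIsoOfFin (Midx.card_img x)).symm ⟨x j, Midx.mem_img x j⟩

lemma Midx.iota_hmap {t : ℕ} (x : Fin (t + 1) → {x : S // x ≠ pt}) (j : Fin (t + 1)) :
    Midx.iota x (Midx.hmap x j) = x j := by
  have := Finset.coe_orderIsoOfFin_apply (Midx.img x) (Midx.card_img x) (Midx.hmap x j)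
  rw [Midx.iota, ← this, Midx.hmap, OrderIso.apply_symm_apply]

lemma Midx.iota_comp_hmap {t : ℕ} (x : Fin (t + 1) → {x : S // x ≠ pt}) :
    Midx.iota x ∘ Midx.hmap x = x := funext (Midx.iota_hmap x)

lemma Midx.hmap_surj {t : ℕ} (x : Fin (t + 1) → {x : S // x ≠ pt}) :
    Function.Surjective (Midx.hmap x) := by
  intro k
  have hmem : Midx.iota x k ∈ Midx.img x := Finset.orderEmbOfFin_mem _ _ k
  obtain ⟨j, -, hj⟩ := Finset.mem_image.1 hmem
  refine ⟨j, ?_⟩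
  rw [Midx.hmap, OrderIso.symm_apply_eq]
  apply Subtype.ext
  rw [Finset.coe_orderIsoOfFin_apply]
  exact hj

end MBasisAux

section MBasisMain

variable {R : Type} [CommRing R] {S : Type} {pt : S} [LinearOrder {x : S // x ≠ pt}]

/-- The value of the canonical natural transformation on a basis tuple `x`. -/
noncomputable def Mphi (F : OmegaFunctor R) (a : ∀ i : Idx S pt, F.obj i.1)
    {t : ℕ} (x : Fin (t + 1) → {x : S // x ≠ pt}) : F.obj t :=
  F.map (Midx.hmap x) (Midx.hmap_surj x) (a ⟨Midx.len x, Midx.iota x, Midx.iota_mono x⟩)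

lemma OmegaFunctor.map_congr (F : OmegaFunctor R) {s t : ℕ}
    (h₁ h₂ : Fin (t + 1) → Fin (s + 1)) (p₁ : Function.Surjective h₁)
    (p₂ : Function.Surjective h₂) (hh : h₁ = h₂) (v : F.obj s) :
    F.map h₁ p₁ v = F.map h₂ p₂ v := by subst hh; rfl

/-- `Mphi` agrees with any factorization of `x` into a strictly monotone tuple
composed with a surjection. -/
lemma Mphi_factor (F : OmegaFunctor R) (a : ∀ i : Idx S pt, F.obj i.1)
    {t : ℕ} (x : Fin (t + 1) → {x : S // x ≠ pt}) {s : ℕ}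
    (ι : Fin (s + 1) → {x : S // x ≠ pt}) (hι : StrictMono ι)
    (h : Fin (t + 1) → Fin (s + 1)) (hs : Function.Surjective h) (hx : ι ∘ h = x) :
    Mphi F a x = F.map h hs (a ⟨s, ι, hι⟩) := by
  have hxj : ∀ j, x j = ι (h j) := by intro j; rw [← hx]; rfl
  have hmem : ∀ k, ι k ∈ Midx.img x := by
    intro k; obtain ⟨j, rfl⟩ := hs k
    rw [← hxj j]; exact Midx.mem_img x j
  have hcard : (Midx.img x).card = s + 1 := by
    have h1 : Midx.img x = Finset.image ι Finset.univ := by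
      apply Finset.Subset.antisymm
      · intro y hy
        obtain ⟨j, -, rfl⟩ := Finset.mem_image.1 hy
        rw [hxj j]
        exact Finset.mem_image_of_mem ι (Finset.mem_univ (h j))
      · intro y hy
        obtain ⟨k, -, rfl⟩ := Finset.mem_image.1 hy
        exact hmem k
    rw [h1, Finset.card_image_of_injective _ hι.injective, Finset.card_univ,
      Fintype.card_fin]
  have hlen : Midx.len x = s := by have := Midx.card_img x; omega
  subst hlen
  have hιeq : ι = Midx.iota x :=
    Finset.orderEmbOfFin_unique (Midx.card_img x) hmem hι
  subst hιeq
  have hh : Midx.hmap x = h := by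
    funext j
    apply (Midx.iota_mono x).injective
    rw [Midx.iota_hmap]
    exact hxj j
  exact F.map_congr _ _ _ _ hh _

lemma Mphi_natural (F : OmegaFunctor R) (a : ∀ i : Idx S pt, F.obj i.1)
    {s t : ℕ} (x : Fin (s + 1) → {x : S // x ≠ pt})
    (h : Fin (t + 1) → Fin (s + 1)) (hs : Function.Surjective h) :
    Mphi F a (x ∘ h) = F.map h hs (Mphi F a x) := by
  rw [Mphi_factor F a (x ∘ h) (Midx.iota x) (Midx.iota_mono x)
    (Midx.hmap x ∘ h) ((Midx.hmap_surj x).comp hs)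
    (by rw [← Function.comp_assoc, Midx.iota_comp_hmap]),
    F.map_comp (Midx.hmap x) (Midx.hmap_surj x) h hs]
  rfl

end MBasisMain

/-- basis property of `M(S)`, from the proof of Lemma 0.1.
The elements `e_i = [x₁ ∧ ⋯ ∧ x_s]`, for `i = (x₁ < ⋯ < x_s) ∈ I`, form a basis of
the functor `M(S)`: for every functor `F : Ωᵒᵖ → Mod R` and every family
`a_i ∈ F(⟨|i|⟩)` there is a unique natural transformation `T : M(S) → F` with
`T(e_i) = a_i` for all `i ∈ I`. -/
theorem M_basis (R : Type) [CommRing R] (S : Type) (pt : S)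
    [LinearOrder {x : S // x ≠ pt}]
    (F : OmegaFunctor R) (a : ∀ i : Idx S pt, F.obj i.1) :
    ∃! T : ((Mfun R S pt).Nat F),
      ∀ i : Idx S pt, T.1 i.1 (Finsupp.single i.2.1 1) = a i := by
  classical
  set Tfun : ∀ t : ℕ, (Mfun R S pt).obj t →ₗ[R] F.obj t :=
    fun t => Finsupp.lift (F.obj t) R (Fin (t + 1) → {x : S // x ≠ pt}) (Mphi F a)
    with hTfun
  have hsingle : ∀ (t : ℕ) (x : Fin (t + 1) → {x : S // x ≠ pt}) (b : R),
      Tfun t (Finsupp.single x b) = b • Mphi F a x := by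
    intro t x b
    show ((Finsupp.lift (F.obj t) R (Fin (t + 1) → {x : S // x ≠ pt})) (Mphi F a))
      (Finsupp.single x b) = b • Mphi F a x
    rw [Finsupp.lift_apply, Finsupp.sum_single_index]
    exact zero_smul R _
  have hnat : Tfun ∈ (Mfun R S pt).Nat F := by
    intro s t h hs
    apply Finsupp.lhom_ext
    intro x b
    show F.map h hs (Tfun s (Finsupp.single x b)) =
      Tfun t (Finsupp.mapDomain (fun y => y ∘ h) (Finsupp.single x b))
    rw [Finsupp.mapDomain_single, hsingle, hsingle, map_smul,
      Mphi_natural F a x h hs]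
  -- any natural transformation with the prescribed values agrees with Tfun on singles
  have huniq : ∀ T' : ((Mfun R S pt).Nat F),
      (∀ i : Idx S pt, T'.1 i.1 (Finsupp.single i.2.1 1) = a i) →
      ∀ (t : ℕ) (x : Fin (t + 1) → {x : S // x ≠ pt}) (b : R),
        T'.1 t (Finsupp.single x b) = b • Mphi F a x := by
    intro T' hT' t x b
    have hnat' := T'.2 (Midx.hmap x) (Midx.hmap_surj x)
    have := congrArg (fun f => f (Finsupp.single (Midx.iota x) b)) hnat'
    change F.map _ _ (T'.1 _ _) = T'.1 t ((Mfun R S pt).map _ _ _) at this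
    have hmd : (Mfun R S pt).map (Midx.hmap x) (Midx.hmap_surj x)
        (Finsupp.single (Midx.iota x) b) = Finsupp.single x b := by
      show Finsupp.mapDomain (fun y => y ∘ Midx.hmap x)
        (Finsupp.single (Midx.iota x) b) = Finsupp.single x b
      rw [Finsupp.mapDomain_single, Midx.iota_comp_hmap]
    rw [hmd] at this
    rw [← this]
    have hb : (Finsupp.single (Midx.iota x) b : (Fin (Midx.len x + 1) →
        {x : S // x ≠ pt}) →₀ R) = b • Finsupp.single (Midx.iota x) 1 := by
      rw [Finsupp.smul_single, smul_eq_mul, mul_one]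
    rw [hb]
    erw [map_smul]
    rw [map_smul,
      hT' ⟨Midx.len x, Midx.iota x, Midx.iota_mono x⟩]
    rfl
  refine ⟨⟨Tfun, hnat⟩, ?_, ?_⟩
  · rintro ⟨s, ι, hι⟩
    show Tfun s (Finsupp.single ι 1) = a ⟨s, ι, hι⟩
    rw [hsingle, one_smul,
      Mphi_factor F a ι ι hι id Function.surjective_id rfl, F.map_id]
    rfl
  · intro T' hT'
    apply Subtype.ext
    funext t
    apply Finsupp.lhom_ext
    intro x b
    show T'.1 t (Finsupp.single x b) = Tfun t (Finsupp.single x b)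
    rw [huniq T' hT' t x b, hsingle t x b]
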